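/- Let (U_i)_{i∈ℕ} be pairwise disjoint non-empty open subsets of a topological space Y whose union is dense in Y, and for each i let B_i be a countable basis of U_i. Then one can choose non-empty open sets V_{n(j)} ∈ ⋃_i B_i and pairwise disjoint non-empty open sets W_j ⊆ V_{n(j)} (j ∈ ℕ) such that ⋃_j W_j is dense in Y. -/

import Mathlib

open Filter Set TopologicalSpace

open scoped Classical in
noncomputable def gstep {Y : Type*} (f : ℕ → Set Y) : ℕ → Set Y × Set Y
  | 0 => (f 0, f 0)
  | k+1 =>
    let A := (gstep f k).2
    let w := if Disjoint (f (k+1)) A then f (k+1) else ∅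
    (w, A ∪ w)

lemma gstep_fst {Y : Type*} (f : ℕ → Set Y) (k : ℕ) :
    (gstep f k).1 = f k ∨ (gstep f k).1 = ∅ := by
  cases k with
  | zero => left; rfl
  | succ k =>
      simp only [gstep]
      split <;> simp

lemma gstep_zero_fst {Y : Type*} (f : ℕ → Set Y) : (gstep f 0).1 = f 0 := rfl

lemma gstep_fst_subset_snd {Y : Type*} (f : ℕ → Set Y) (k : ℕ) :
    (gstep f k).1 ⊆ (gstep f k).2 := by
  cases k with
  | zero => exact subset_rfl
  | succ k => simp only [gstep]; exact subset_union_right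

lemma gstep_snd_mono {Y : Type*} (f : ℕ → Set Y) {k l : ℕ} (h : k ≤ l) :
    (gstep f k).2 ⊆ (gstep f l).2 := by
  induction l with
  | zero => simp_all
  | succ l ih =>
      rcases Nat.lt_or_ge k (l+1) with h' | h'
      · exact (ih (Nat.lt_succ_iff.mp h')).trans (by simp only [gstep]; exact subset_union_left)
      · have : k = l + 1 := le_antisymm h h'
        subst this; exact subset_rfl

lemma gstep_succ_disjoint {Y : Type*} (f : ℕ → Set Y) (k : ℕ) :
    Disjoint ((gstep f (k+1)).1) ((gstep f k).2) := by
  simp only [gstep]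
  split
  · assumption
  · simp

lemma gstep_pairwise {Y : Type*} (f : ℕ → Set Y) {k l : ℕ} (h : k < l) :
    Disjoint ((gstep f l).1) ((gstep f k).1) := by
  obtain ⟨m, rfl⟩ : ∃ m, l = m + 1 := ⟨l - 1, (Nat.succ_pred_eq_of_pos (Nat.zero_lt_of_lt h)).symm⟩
  exact (gstep_succ_disjoint f m).mono_right
    ((gstep_fst_subset_snd f k).trans (gstep_snd_mono f (Nat.lt_succ_iff.mp h)))

lemma gstep_snd_subset_iUnion {Y : Type*} (f : ℕ → Set Y) (k : ℕ) :
    (gstep f k).2 ⊆ ⋃ l, (gstep f l).1 := by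
  induction k with
  | zero => exact subset_iUnion (fun l => (gstep f l).1) 0
  | succ k ih =>
      simp only [gstep]
      exact union_subset ih (by exact subset_iUnion (fun l => (gstep f l).1) (k+1))

lemma gstep_meets {Y : Type*} (f : ℕ → Set Y) (k : ℕ) (hk : (f k).Nonempty) :
    (f k ∩ (gstep f k).2).Nonempty := by
  cases k with
  | zero => simpa [gstep] using hk
  | succ k =>
      simp only [gstep]
      by_cases h : Disjoint (f (k+1)) ((gstep f k).2)
      · simp only [if_pos h]
        exact ⟨hk.choose, hk.choose_spec, Or.inr (by simp [if_pos h, hk.choose_spec])⟩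
      · rw [Set.not_disjoint_iff_nonempty_inter] at h
        exact h.mono (inter_subset_inter_right _ subset_union_left)

/-- Greedy selection lemma: if `(U i)` are pairwise disjoint non-empty open sets with dense
union in a topological space `Y` and each `B i` is a countable basis of the subspace `U i`
(a countable family of non-empty open subsets of `U i` refining every non-empty open subset
of `U i`), then one can choose sets `V j ∈ ⋃ i, B i` and pairwise disjoint non-empty open
sets `W j ⊆ V j` whose union is dense in `Y`. -/
theorem greedy_disjoint_dense_selection
    {Y : Type*} [TopologicalSpace Y] (U : ℕ → Set Y)
    (hUopen : ∀ i, IsOpen (U i)) (hUne : ∀ i, (U i).Nonempty)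
    (hUdisj : Pairwise fun i j => Disjoint (U i) (U j))
    (hUdense : Dense (⋃ i, U i))
    (B : ℕ → Set (Set Y)) (hBcount : ∀ i, (B i).Countable)
    (hBopen : ∀ i, ∀ W ∈ B i, IsOpen W ∧ W.Nonempty ∧ W ⊆ U i)
    (hBbasis : ∀ i, ∀ V : Set Y, IsOpen V → V.Nonempty → V ⊆ U i → ∃ W ∈ B i, W ⊆ V) :
    ∃ V W : ℕ → Set Y,
      (∀ j, V j ∈ ⋃ i, B i) ∧
      (∀ j, IsOpen (W j) ∧ (W j).Nonempty ∧ W j ⊆ V j) ∧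
      (Pairwise fun j j' => Disjoint (W j) (W j')) ∧
      Dense (⋃ j, W j) := by
  -- enumerate each basis
  have hBne : ∀ i, (B i).Nonempty := fun i => by
    obtain ⟨W, hW, -⟩ := hBbasis i (U i) (hUopen i) (hUne i) subset_rfl
    exact ⟨W, hW⟩
  choose f hf using fun i => (hBcount i).exists_eq_range (hBne i)
  have hfmem : ∀ i k, f i k ∈ B i := fun i k => (hf i) ▸ mem_range_self k
  set W' : ℕ → ℕ → Set Y := fun i k => (gstep (f i) k).1 with hW'
  have hW'cases : ∀ i k, W' i k = f i k ∨ W' i k = ∅ := fun i k => gstep_fst (f i) k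
  have hW'sub : ∀ i k, W' i k ⊆ f i k := fun i k => by
    rcases hW'cases i k with h | h <;> simp [h]
  have hW'subU : ∀ i k, W' i k ⊆ U i := fun i k =>
    (hW'sub i k).trans (hBopen i _ (hfmem i k)).2.2
  have hW'open : ∀ i k, IsOpen (W' i k) := fun i k => by
    rcases hW'cases i k with h | h
    · rw [h]; exact (hBopen i _ (hfmem i k)).1
    · rw [h]; exact isOpen_empty
  have hW'disj : ∀ i, ∀ k l, k ≠ l → Disjoint (W' i k) (W' i l) := by
    intro i k l hkl
    rcases hkl.lt_or_gt with h | h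
    · exact (gstep_pairwise (f i) h).symm
    · exact gstep_pairwise (f i) h
  -- the selected set of indices
  set S : Set (ℕ × ℕ) := {p | (W' p.1 p.2).Nonempty} with hS
  have hSinf : S.Infinite := by
    apply Set.infinite_of_injective_forall_mem (f := fun i : ℕ => (i, 0))
    · intro a b hab; exact (Prod.ext_iff.mp hab).1
    · intro i
      show (W' i 0).Nonempty
      have : W' i 0 = f i 0 := gstep_zero_fst (f i)
      rw [this]; exact (hBopen i _ (hfmem i 0)).2.1
  haveI : Infinite S := hSinf.to_subtype
  obtain ⟨d⟩ := nonempty_denumerable S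
  let e : ℕ ≃ S := (Denumerable.eqv S).symm
  refine ⟨fun j => f (e j : ℕ × ℕ).1 (e j : ℕ × ℕ).2,
    fun j => W' (e j : ℕ × ℕ).1 (e j : ℕ × ℕ).2, ?_, ?_, ?_, ?_⟩
  · intro j
    exact mem_iUnion.mpr ⟨(e j : ℕ × ℕ).1, hfmem _ _⟩
  · intro j
    exact ⟨hW'open _ _, (e j).2, hW'sub _ _⟩
  · intro j j' hjj'
    have hne : (e j : ℕ × ℕ) ≠ (e j' : ℕ × ℕ) := by
      intro h
      exact hjj' (e.injective (Subtype.ext h))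
    by_cases h1 : (e j : ℕ × ℕ).1 = (e j' : ℕ × ℕ).1
    · have h2 : (e j : ℕ × ℕ).2 ≠ (e j' : ℕ × ℕ).2 := fun h2 => hne (Prod.ext h1 h2)
      exact (hW'disj (e j' : ℕ × ℕ).1 _ _ h2).mono (le_of_eq (by simp only []; rw [h1])) le_rfl
    · exact (hUdisj h1).mono (hW'subU _ _) (hW'subU _ _)
  · -- density
    have hTeq : (⋃ j, W' (e j : ℕ × ℕ).1 (e j : ℕ × ℕ).2) = ⋃ p : ℕ × ℕ, W' p.1 p.2 := by
      apply subset_antisymm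
      · exact iUnion_subset fun j => subset_iUnion (fun p : ℕ × ℕ => W' p.1 p.2) (e j : ℕ × ℕ)
      · refine iUnion_subset fun p x hx => ?_
        have hp : p ∈ S := ⟨x, hx⟩
        refine mem_iUnion.mpr ⟨e.symm ⟨p, hp⟩, ?_⟩
        simpa using hx
    rw [hTeq]
    rw [dense_iff_inter_open]
    intro O hO hOne
    obtain ⟨y, hyO, hyU⟩ := (dense_iff_inter_open.mp hUdense) O hO hOne
    obtain ⟨i, hyi⟩ := mem_iUnion.mp hyU
    obtain ⟨Wb, hWb, hWbsub⟩ := hBbasis i (O ∩ U i) (hO.inter (hUopen i)) ⟨y, hyO, hyi⟩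
      inter_subset_right
    obtain ⟨k, hk⟩ := (hf i ▸ hWb : Wb ∈ range (f i))
    subst hk
    obtain ⟨x, hxf, hxA⟩ := gstep_meets (f i) k (hBopen i _ (hfmem i k)).2.1
    obtain ⟨l, hl⟩ := mem_iUnion.mp (gstep_snd_subset_iUnion (f i) k hxA)
    exact ⟨x, (hWbsub hxf).1, mem_iUnion.mpr ⟨(i, l), hl⟩⟩
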